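/- The hyperspace C([0,∞)) of nonempty closed connected subsets of the ray [0,∞), with the topology induced by the (extended-real-valued) Hausdorff distance, is homeomorphic to the disjoint union T^∞ ⊔ [0,∞), where T^∞ = {(a,b) ∈ ℝ² : 0 ≤ a ≤ b}, via the map sending [a,b] to (a,b) ∈ T^∞ and [a,∞) to a ∈ [0,∞). -/

import Mathlib

open Set TopologicalSpace

/-- The hyperspace `C([0,∞))` of nonempty closed connected subsets of the ray `[0,∞)`,
with the topology induced by the (extended-real-valued) Hausdorff distance. -/
def CRay : Type := {A : Closeds ℝ // IsConnected (A : Set ℝ) ∧ (A : Set ℝ) ⊆ Ici (0:ℝ)}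

noncomputable instance : EMetricSpace CRay := by unfold CRay; infer_instance

/-- The infinite triangle `T^∞ = {(a,b) ∈ ℝ² : 0 ≤ a ≤ b}`. -/
def TriInf : Type := {p : ℝ × ℝ // 0 ≤ p.1 ∧ p.1 ≤ p.2}

noncomputable instance : MetricSpace TriInf := by unfold TriInf; infer_instance

open EMetric

lemma redist (x y : ℝ) : edist x y = ENNReal.ofReal |x - y| := by
  rw [edist_dist, Real.dist_eq]

lemma edist_le_edist_real {x u y : ℝ} (h : |x - u| ≤ |x - y|) : edist x u ≤ edist x y := by
  rw [redist, redist]; exact ENNReal.ofReal_le_ofReal h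

lemma le_haus {s t : Set ℝ} {x : ℝ} {r : ENNReal} (hx : x ∈ s)
    (h : ∀ y ∈ t, r ≤ edist x y) : r ≤ hausdorffEdist s t :=
  le_trans (le_infEdist.2 h) (infEdist_le_hausdorffEdist_of_mem hx)

lemma hausdorffEdist_comm' {s t : Set ℝ} : hausdorffEdist s t = hausdorffEdist t s :=
  Metric.hausdorffEDist_comm

lemma key_Icc {a b c d : ℝ} (hab : a ≤ b) (hcd : c ≤ d) :
    ∀ x ∈ Icc a b, ∃ y ∈ Icc c d, edist x y ≤ max (edist a c) (edist b d) := by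
  intro x hx
  rcases le_total x c with h | h
  · refine ⟨c, ⟨le_refl c, hcd⟩, le_trans ?_ (le_max_left _ _)⟩
    rw [redist, redist]
    apply ENNReal.ofReal_le_ofReal
    have h1 : |x - c| = c - x := by rw [abs_sub_comm, abs_of_nonneg (by linarith)]
    have h2 : c - a ≤ |a - c| := by rw [abs_sub_comm]; exact le_abs_self _
    have := hx.1
    linarith
  · rcases le_total x d with h2 | h2
    · exact ⟨x, ⟨h, h2⟩, by simp⟩
    · refine ⟨d, ⟨hcd, le_refl d⟩, le_trans ?_ (le_max_right _ _)⟩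
      rw [redist, redist]
      apply ENNReal.ofReal_le_ofReal
      have h1 : |x - d| = x - d := abs_of_nonneg (by linarith)
      have h3 : b - d ≤ |b - d| := le_abs_self _
      have := hx.2
      linarith

lemma haus_Icc {a b c d : ℝ} (hab : a ≤ b) (hcd : c ≤ d) :
    hausdorffEdist (Icc a b) (Icc c d) = max (edist a c) (edist b d) := by
  apply le_antisymm
  · refine hausdorffEdist_le_of_mem_edist (key_Icc hab hcd) (fun y hy => ?_)
    obtain ⟨x, hx, hxy⟩ := key_Icc hcd hab y hy
    exact ⟨x, hx, by rwa [edist_comm c a, edist_comm d b] at hxy⟩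
  · rw [max_le_iff]
    constructor
    · rcases le_total a c with h | h
      · refine le_haus (x := a) ⟨le_refl a, hab⟩ (fun y hy => ?_)
        apply edist_le_edist_real
        rw [abs_sub_comm, abs_of_nonneg (by linarith), abs_sub_comm,
          abs_of_nonneg (by linarith [hy.1])]
        linarith [hy.1]
      · rw [hausdorffEdist_comm', edist_comm]
        refine le_haus (x := c) ⟨le_refl c, hcd⟩ (fun y hy => ?_)
        apply edist_le_edist_real
        rw [abs_sub_comm, abs_of_nonneg (by linarith), abs_sub_comm,
          abs_of_nonneg (by linarith [hy.1])]
        linarith [hy.1]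
    · rcases le_total b d with h | h
      · rw [hausdorffEdist_comm', edist_comm]
        refine le_haus (x := d) ⟨hcd, le_refl d⟩ (fun y hy => ?_)
        apply edist_le_edist_real
        rw [abs_of_nonneg (by linarith), abs_of_nonneg (by linarith [hy.2])]
        linarith [hy.2]
      · refine le_haus (x := b) ⟨hab, le_refl b⟩ (fun y hy => ?_)
        apply edist_le_edist_real
        rw [abs_of_nonneg (by linarith), abs_of_nonneg (by linarith [hy.2])]
        linarith [hy.2]

lemma key_Ici {a c : ℝ} :
    ∀ x ∈ Ici a, ∃ y ∈ Ici c, edist x y ≤ edist a c := by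
  intro x hx
  rcases le_total c x with h | h
  · exact ⟨x, h, by simp⟩
  · refine ⟨c, le_refl c, ?_⟩
    rw [redist, redist]
    apply ENNReal.ofReal_le_ofReal
    have hax : a ≤ x := mem_Ici.1 hx
    rw [abs_sub_comm, abs_of_nonneg (by linarith), abs_sub_comm,
      abs_of_nonneg (by linarith)]
    linarith

lemma haus_Ici {a c : ℝ} : hausdorffEdist (Ici a) (Ici c) = edist a c := by
  apply le_antisymm
  · refine hausdorffEdist_le_of_mem_edist key_Ici (fun y hy => ?_)
    obtain ⟨x, hx, hxy⟩ := key_Ici (a := c) (c := a) y hy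
    exact ⟨x, hx, by rwa [edist_comm c a] at hxy⟩
  · rcases le_total a c with h | h
    · refine le_haus (x := a) (mem_Ici.2 le_rfl) (fun y hy => ?_)
      apply edist_le_edist_real
      rw [abs_sub_comm, abs_of_nonneg (by linarith), abs_sub_comm,
        abs_of_nonneg (by linarith [mem_Ici.1 hy])]
      linarith [mem_Ici.1 hy]
    · rw [hausdorffEdist_comm', edist_comm]
      refine le_haus (x := c) (mem_Ici.2 le_rfl) (fun y hy => ?_)
      apply edist_le_edist_real
      rw [abs_sub_comm, abs_of_nonneg (by linarith), abs_sub_comm,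
        abs_of_nonneg (by linarith [mem_Ici.1 hy])]
      linarith [mem_Ici.1 hy]

lemma bddAbove_transfer {s t : Set ℝ} (h : hausdorffEdist s t ≠ ⊤)
    (hs : BddAbove s) : BddAbove t := by
  obtain ⟨M, hM⟩ := hs
  refine ⟨M + (hausdorffEdist s t).toReal + 1, fun y hy => ?_⟩
  have h1 : infEdist y s ≤ hausdorffEdist s t := by
    rw [hausdorffEdist_comm']
    exact infEdist_le_hausdorffEdist_of_mem hy
  have h2 : infEdist y s < ENNReal.ofReal ((hausdorffEdist s t).toReal + 1) := by
    refine lt_of_le_of_lt h1 ?_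
    conv_lhs => rw [← ENNReal.ofReal_toReal h]
    exact (ENNReal.ofReal_lt_ofReal_iff (by positivity)).2 (by linarith)
  obtain ⟨x, hxs, hxy⟩ := infEdist_lt_iff.1 h2
  rw [edist_dist] at hxy
  have hd : dist y x < (hausdorffEdist s t).toReal + 1 :=
    (ENNReal.ofReal_lt_ofReal_iff_of_nonneg dist_nonneg).1 hxy
  have h3 : y - x ≤ |y - x| := le_abs_self _
  have h4 := hM hxs
  rw [Real.dist_eq] at hd
  simp only [mem_upperBounds] at *
  linarith

lemma eq_Icc_of {s : Set ℝ} (hc : IsClosed s) (hne : s.Nonempty) (hconn : IsPreconnected s)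
    (hbb : BddBelow s) (hba : BddAbove s) : s = Icc (sInf s) (sSup s) := by
  apply Subset.antisymm
  · exact fun x hx => ⟨csInf_le hbb hx, le_csSup hba hx⟩
  · exact fun x hx => hconn.ordConnected.out (hc.csInf_mem hne hbb) (hc.csSup_mem hne hba) hx

lemma eq_Ici_of {s : Set ℝ} (hc : IsClosed s) (hne : s.Nonempty) (hconn : IsPreconnected s)
    (hbb : BddBelow s) (hba : ¬ BddAbove s) : s = Ici (sInf s) := by
  apply Subset.antisymm
  · exact fun x hx => csInf_le hbb hx
  · intro x hx
    obtain ⟨y, hy, hxy⟩ := not_bddAbove_iff.1 hba x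
    exact hconn.ordConnected.out (hc.csInf_mem hne hbb) hy ⟨hx, hxy.le⟩

-- basic facts about elements of `CRay`
lemma CRay.hne (A : CRay) : (A.1 : Set ℝ).Nonempty := A.2.1.nonempty

lemma CRay.hbb (A : CRay) : BddBelow (A.1 : Set ℝ) := (bddBelow_Ici).mono A.2.2

lemma CRay.h0 (A : CRay) : 0 ≤ sInf (A.1 : Set ℝ) :=
  le_csInf A.hne (fun _ hx => A.2.2 hx)

lemma CRay.edist_def (A B : CRay) :
    edist A B = hausdorffEdist (A.1 : Set ℝ) (B.1 : Set ℝ) := rfl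

lemma TriInf.edist_def (p q : TriInf) :
    edist p q = max (edist p.1.1 q.1.1) (edist p.1.2 q.1.2) := by
  have h : edist p q = edist p.1 q.1 := rfl
  rw [h, Prod.edist_eq]

/-- `[a,b] ↦` element of `CRay`. -/
noncomputable def g1 : TriInf → CRay := fun p =>
  ⟨⟨Icc p.1.1 p.1.2, isClosed_Icc⟩,
    ⟨nonempty_Icc.2 p.2.2, isPreconnected_Icc⟩,
    Icc_subset_Ici_self.trans (Ici_subset_Ici.2 p.2.1)⟩

/-- `[a,∞) ↦` element of `CRay`. -/
noncomputable def g2 : {x : ℝ // 0 ≤ x} → CRay := fun a =>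
  ⟨⟨Ici a.1, isClosed_Ici⟩,
    ⟨nonempty_Ici, isPreconnected_Ici⟩,
    Ici_subset_Ici.2 a.2⟩

open Classical in
/-- The forward map of the homeomorphism. -/
noncomputable def fmap : CRay → TriInf ⊕ {x : ℝ // 0 ≤ x} := fun A =>
  if h : BddAbove (A.1 : Set ℝ) then
    Sum.inl ⟨(sInf (A.1 : Set ℝ), sSup (A.1 : Set ℝ)),
      A.h0, csInf_le_csSup A.hne A.hbb h⟩
  else Sum.inr ⟨sInf (A.1 : Set ℝ), A.h0⟩

noncomputable def eqv : (TriInf ⊕ {x : ℝ // 0 ≤ x}) ≃ CRay where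
  toFun := Sum.elim g1 g2
  invFun := fmap
  left_inv := by
    rintro (p | a)
    · show fmap (g1 p) = Sum.inl p
      have hba : BddAbove ((g1 p).1 : Set ℝ) := bddAbove_Icc
      rw [fmap, dif_pos hba]
      congr 1
      refine Subtype.ext (Prod.ext ?_ ?_)
      · exact csInf_Icc p.2.2
      · exact csSup_Icc p.2.2
    · show fmap (g2 a) = Sum.inr a
      have hba : ¬ BddAbove ((g2 a).1 : Set ℝ) := not_bddAbove_Ici (a := a.1)
      rw [fmap, dif_neg hba]
      congr 1
      exact Subtype.ext csInf_Ici
  right_inv := by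
    intro A
    by_cases h : BddAbove (A.1 : Set ℝ)
    · have : fmap A = Sum.inl ⟨(sInf (A.1 : Set ℝ), sSup (A.1 : Set ℝ)),
          A.h0, csInf_le_csSup A.hne A.hbb h⟩ := dif_pos h
      rw [this]
      refine Subtype.ext (Closeds.ext ?_)
      exact (eq_Icc_of A.1.isClosed A.hne A.2.1.isPreconnected A.hbb h).symm
    · have : fmap A = Sum.inr ⟨sInf (A.1 : Set ℝ), A.h0⟩ := dif_neg h
      rw [this]
      refine Subtype.ext (Closeds.ext ?_)
      exact (eq_Ici_of A.1.isClosed A.hne A.2.1.isPreconnected A.hbb h).symm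

lemma isom_g1 : Isometry g1 := by
  intro p q
  rw [CRay.edist_def, TriInf.edist_def]
  exact haus_Icc p.2.2 q.2.2

lemma isom_g2 : Isometry g2 := by
  intro a b
  rw [CRay.edist_def]
  have h : edist a b = edist a.1 b.1 := rfl
  rw [h]
  exact haus_Ici

lemma isOpen_U : IsOpen {A : CRay | BddAbove (A.1 : Set ℝ)} := by
  rw [EMetric.isOpen_iff]
  intro A hA
  refine ⟨1, one_pos, fun B hB => ?_⟩
  rw [EMetric.mem_ball, CRay.edist_def] at hB
  have hne : hausdorffEdist (A.1 : Set ℝ) (B.1 : Set ℝ) ≠ ⊤ := by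
    rw [hausdorffEdist_comm']
    exact ne_top_of_lt (hB.trans_le le_top)
  exact bddAbove_transfer hne hA

lemma isOpen_Uc : IsOpen {A : CRay | ¬ BddAbove (A.1 : Set ℝ)} := by
  rw [EMetric.isOpen_iff]
  intro A hA
  refine ⟨1, one_pos, fun B hB hBb => ?_⟩
  rw [EMetric.mem_ball, CRay.edist_def] at hB
  exact hA (bddAbove_transfer (ne_top_of_lt (hB.trans_le le_top)) hBb)

lemma range_g1 : range g1 = {A : CRay | BddAbove (A.1 : Set ℝ)} := by
  apply Subset.antisymm
  · rintro _ ⟨p, rfl⟩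
    exact bddAbove_Icc
  · intro A hA
    refine ⟨⟨(sInf (A.1 : Set ℝ), sSup (A.1 : Set ℝ)),
      A.h0, csInf_le_csSup A.hne A.hbb hA⟩, ?_⟩
    refine Subtype.ext (Closeds.ext ?_)
    exact (eq_Icc_of A.1.isClosed A.hne A.2.1.isPreconnected A.hbb hA).symm

lemma range_g2 : range g2 = {A : CRay | ¬ BddAbove (A.1 : Set ℝ)} := by
  apply Subset.antisymm
  · rintro _ ⟨a, rfl⟩
    exact not_bddAbove_Ici (a := a.1)
  · intro A hA
    refine ⟨⟨sInf (A.1 : Set ℝ), A.h0⟩, ?_⟩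
    refine Subtype.ext (Closeds.ext ?_)
    exact (eq_Ici_of A.1.isClosed A.hne A.2.1.isPreconnected A.hbb hA).symm

lemma cont_eqv : Continuous eqv :=
  isom_g1.continuous.sumElim isom_g2.continuous

lemma openMap_eqv : IsOpenMap eqv := by
  rw [show (eqv : TriInf ⊕ {x : ℝ // 0 ≤ x} → CRay) = Sum.elim g1 g2 from rfl]
  refine isOpenMap_sum.2 ⟨?_, ?_⟩
  · exact isom_g1.isEmbedding.isInducing.isOpenMap (range_g1 ▸ isOpen_U)
  · exact isom_g2.isEmbedding.isInducing.isOpenMap (range_g2 ▸ isOpen_Uc)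

/-- `C([0,∞))` with the extended Hausdorff metric topology is homeomorphic to the
disjoint union `T^∞ ⊔ [0,∞)`, via `[a,b] ↦ (a,b) ∈ T^∞` and `[a,∞) ↦ a ∈ [0,∞)`. -/
theorem stmt_3 :
    ∃ h : CRay ≃ₜ (TriInf ⊕ {x : ℝ // 0 ≤ x}),
      (∀ (a b : ℝ) (h0 : 0 ≤ a) (hab : a ≤ b),
        h ⟨⟨Icc a b, isClosed_Icc⟩,
            ⟨(nonempty_Icc.2 hab), isPreconnected_Icc⟩,
            Icc_subset_Ici_self.trans (Ici_subset_Ici.2 h0)⟩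
          = Sum.inl ⟨(a, b), h0, hab⟩) ∧
      (∀ (a : ℝ) (h0 : 0 ≤ a),
        h ⟨⟨Ici a, isClosed_Ici⟩,
            ⟨nonempty_Ici, isPreconnected_Ici⟩,
            Ici_subset_Ici.2 h0⟩
          = Sum.inr ⟨a, h0⟩) := by
  refine ⟨(Equiv.toHomeomorphOfContinuousOpen eqv cont_eqv openMap_eqv).symm, ?_, ?_⟩
  · intro a b h0 hab
    exact Homeomorph.symm_apply_apply (Equiv.toHomeomorphOfContinuousOpen eqv cont_eqv openMap_eqv) (Sum.inl ⟨(a, b), h0, hab⟩)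
  · intro a h0
    exact Homeomorph.symm_apply_apply (Equiv.toHomeomorphOfContinuousOpen eqv cont_eqv openMap_eqv) (Sum.inr ⟨a, h0⟩)
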